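/- Let Q be a probability measure on 𝒴, let Y : Ω → 𝒴 be a random element with law Q, and let P̂ be a random probability measure on 𝒴 defined on the same probability space and independent of Y. Then the expected kernel score decomposes as E[S_k(P̂, Y)] = −⟨Q|k|Q⟩ + (⟨E[P̂]|k|E[P̂]⟩ − 2⟨E[P̂]|k|Q⟩ + ⟨Q|k|Q⟩) + Var_k(P̂); that is, it equals the noise −‖Q‖_k² plus the bias ‖E[P̂] − Q‖_k² plus the distributional variance Var_k(P̂). -/

import Mathlib

open MeasureTheory ProbabilityTheory

noncomputable section

/-- The kernel bilinear form `⟨P|k|Q⟩ = ∫∫ k(x,y) dP(x) dQ(y)`. -/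
def kerInner {Y : Type*} [MeasurableSpace Y] (k : Y → Y → ℝ) (P Q : Measure Y) : ℝ :=
  ∫ x, ∫ y, k x y ∂Q ∂P

/-- The kernel score `S_k(P, y) = ‖P‖_k² − 2 ∫ k(x, y) dP(x)`. -/
def kScore {Y : Type*} [MeasurableSpace Y] (k : Y → Y → ℝ) (P : Measure Y) (y : Y) : ℝ :=
  kerInner k P P - 2 * ∫ x, k x y ∂P

/-- The distributional variance `Var_k(P̂) = E[⟨P̂|k|P̂⟩] − ⟨E[P̂]|k|E[P̂]⟩`, where
`E[P̂] = Pr.bind P̂` is the measure `A ↦ E[P̂(A)]`. -/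
def distVar {Y Ω : Type*} [MeasurableSpace Y] [MeasurableSpace Ω] (k : Y → Y → ℝ)
    (Pr : Measure Ω) (Phat : Ω → Measure Y) : ℝ :=
  (∫ ω, kerInner k (Phat ω) (Phat ω) ∂Pr) - kerInner k (Pr.bind Phat) (Pr.bind Phat)

namespace KSBVD

open scoped ENNReal

variable {Y Ω : Type*} [MeasurableSpace Y] [MeasurableSpace Ω]

/-- Probability measures as a subtype (so that the subtype σ-algebra instance applies). -/
abbrev PM (Y : Type*) [MeasurableSpace Y] := {μ : Measure Y // IsProbabilityMeasure μ}

instance (P : PM Y) : IsProbabilityMeasure (P : Measure Y) := P.2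

lemma integrable_of_bound (ν : Measure Y) [IsFiniteMeasure ν]
    {f : Y → ℝ} (hf : AEStronglyMeasurable f ν) {K : ℝ} (h : ∀ x, |f x| ≤ K) :
    Integrable f ν :=
  ⟨hf, HasFiniteIntegral.of_bounded (C := K) (Filter.Eventually.of_forall fun x => by
    simpa [Real.norm_eq_abs] using h x)⟩

lemma abs_integral_le (ν : Measure Y) [IsProbabilityMeasure ν]
    {f : Y → ℝ} {K : ℝ} (h : ∀ x, |f x| ≤ K) : |∫ x, f x ∂ν| ≤ K := by
  have := norm_integral_le_of_norm_le_const (μ := ν) (f := f) (C := K)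
    (Filter.Eventually.of_forall fun x => by simpa [Real.norm_eq_abs] using h x)
  simpa [Real.norm_eq_abs] using this

lemma integral_bind_real (Pr : Measure Ω) [IsProbabilityMeasure Pr]
    {μ : Ω → Measure Y} (hμ : Measurable μ)
    (hp : ∀ ω, IsProbabilityMeasure (μ ω)) {f : Y → ℝ} (hf : Measurable f)
    {K : ℝ} (hK0 : 0 ≤ K) (hK : ∀ x, |f x| ≤ K) :
    ∫ x, f x ∂(Pr.bind μ) = ∫ ω, ∫ x, f x ∂(μ ω) ∂Pr := by
  haveI hB : IsProbabilityMeasure (Pr.bind μ) := ⟨by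
    rw [Measure.bind_apply MeasurableSet.univ hμ.aemeasurable]
    simp [(hp _).measure_univ]⟩
  set fp : Y → ℝ≥0∞ := fun x => ENNReal.ofReal (f x) with hfp_def
  set fn : Y → ℝ≥0∞ := fun x => ENNReal.ofReal (-(f x)) with hfn_def
  have hfp : Measurable fp := hf.ennreal_ofReal
  have hfn : Measurable fn := hf.neg.ennreal_ofReal
  have hbp : ∀ (ν : Measure Y), IsProbabilityMeasure ν → ∫⁻ x, fp x ∂ν ≤ ENNReal.ofReal K := by
    intro ν hν
    calc ∫⁻ x, fp x ∂ν ≤ ∫⁻ _, ENNReal.ofReal K ∂ν :=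
          lintegral_mono fun x => ENNReal.ofReal_le_ofReal ((le_abs_self _).trans (hK x))
      _ = ENNReal.ofReal K := by simp
  have hbn : ∀ (ν : Measure Y), IsProbabilityMeasure ν → ∫⁻ x, fn x ∂ν ≤ ENNReal.ofReal K := by
    intro ν hν
    calc ∫⁻ x, fn x ∂ν ≤ ∫⁻ _, ENNReal.ofReal K ∂ν :=
          lintegral_mono fun x => ENNReal.ofReal_le_ofReal ((neg_le_abs _).trans (hK x))
      _ = ENNReal.ofReal K := by simp
  have hint : ∀ (ν : Measure Y), IsProbabilityMeasure ν → Integrable f ν := fun ν hν =>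
    integrable_of_bound ν hf.aestronglyMeasurable hK
  have hmp : Measurable fun ω => ∫⁻ x, fp x ∂(μ ω) :=
    (Measure.measurable_lintegral hfp).comp hμ
  have hmn : Measurable fun ω => ∫⁻ x, fn x ∂(μ ω) :=
    (Measure.measurable_lintegral hfn).comp hμ
  have hip : Integrable (fun ω => (∫⁻ x, fp x ∂(μ ω)).toReal) Pr := by
    refine ⟨hmp.ennreal_toReal.aestronglyMeasurable, ?_⟩
    refine HasFiniteIntegral.of_bounded (C := K) (Filter.Eventually.of_forall fun ω => ?_)
    rw [Real.norm_eq_abs, abs_of_nonneg ENNReal.toReal_nonneg]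
    exact ENNReal.toReal_le_of_le_ofReal hK0 (hbp _ (hp ω))
  have hin : Integrable (fun ω => (∫⁻ x, fn x ∂(μ ω)).toReal) Pr := by
    refine ⟨hmn.ennreal_toReal.aestronglyMeasurable, ?_⟩
    refine HasFiniteIntegral.of_bounded (C := K) (Filter.Eventually.of_forall fun ω => ?_)
    rw [Real.norm_eq_abs, abs_of_nonneg ENNReal.toReal_nonneg]
    exact ENNReal.toReal_le_of_le_ofReal hK0 (hbn _ (hp ω))
  calc ∫ x, f x ∂(Pr.bind μ)
      = (∫⁻ x, fp x ∂(Pr.bind μ)).toReal - (∫⁻ x, fn x ∂(Pr.bind μ)).toReal :=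
        integral_eq_lintegral_pos_part_sub_lintegral_neg_part (hint _ hB)
    _ = (∫⁻ ω, ∫⁻ x, fp x ∂(μ ω) ∂Pr).toReal - (∫⁻ ω, ∫⁻ x, fn x ∂(μ ω) ∂Pr).toReal := by
        rw [Measure.lintegral_bind hμ.aemeasurable hfp.aemeasurable,
          Measure.lintegral_bind hμ.aemeasurable hfn.aemeasurable]
    _ = (∫ ω, (∫⁻ x, fp x ∂(μ ω)).toReal ∂Pr) - (∫ ω, (∫⁻ x, fn x ∂(μ ω)).toReal ∂Pr) := by
        rw [integral_toReal hmp.aemeasurable (Filter.Eventually.of_forall fun ω =>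
            lt_of_le_of_lt (hbp _ (hp ω)) ENNReal.ofReal_lt_top),
          integral_toReal hmn.aemeasurable (Filter.Eventually.of_forall fun ω =>
            lt_of_le_of_lt (hbn _ (hp ω)) ENNReal.ofReal_lt_top)]
    _ = ∫ ω, ((∫⁻ x, fp x ∂(μ ω)).toReal - (∫⁻ x, fn x ∂(μ ω)).toReal) ∂Pr :=
        (integral_sub hip hin).symm
    _ = ∫ ω, ∫ x, f x ∂(μ ω) ∂Pr := integral_congr_ae (Filter.Eventually.of_forall fun ω =>
        (integral_eq_lintegral_pos_part_sub_lintegral_neg_part (hint _ (hp ω))).symm)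

/-- The identity kernel on probability measures. -/
def pmKer (Y : Type*) [MeasurableSpace Y] : Kernel (PM Y) Y :=
  ⟨fun P => (P : Measure Y), measurable_subtype_coe⟩

@[simp] lemma pmKer_apply (P : PM Y) : pmKer Y P = (P : Measure Y) := rfl

instance : IsMarkovKernel (pmKer Y) := ⟨fun P => P.2⟩

/-- The identity kernel on probability measures, parameterized by an extra coordinate. -/
def pmKerFst (Y : Type*) [MeasurableSpace Y] : Kernel (PM Y × Y) Y :=
  ⟨fun p => (p.1 : Measure Y), measurable_subtype_coe.comp measurable_fst⟩

@[simp] lemma pmKerFst_apply (p : PM Y × Y) :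
    pmKerFst Y p = (p.1 : Measure Y) := rfl

instance : IsMarkovKernel (pmKerFst Y) := ⟨fun p => p.1.2⟩

lemma sm_G {k : Y → Y → ℝ} (hk : Measurable fun p : Y × Y => k p.1 p.2) :
    StronglyMeasurable fun p : PM Y × Y => ∫ x, k x p.2 ∂(p.1 : Measure Y) := by
  have h := StronglyMeasurable.integral_kernel_prod_right' (κ := pmKerFst Y)
    (f := fun q : (PM Y × Y) × Y => k q.2 q.1.2)
    ((hk.comp (measurable_snd.prodMk measurable_fst.snd)).stronglyMeasurable)
  simpa using h

lemma sm_G' {k : Y → Y → ℝ} (hk : Measurable fun p : Y × Y => k p.1 p.2) :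
    StronglyMeasurable fun p : PM Y × Y => ∫ y, k p.2 y ∂(p.1 : Measure Y) := by
  have h := StronglyMeasurable.integral_kernel_prod_right' (κ := pmKerFst Y)
    (f := fun q : (PM Y × Y) × Y => k q.1.2 q.2)
    ((hk.comp (measurable_fst.snd.prodMk measurable_snd)).stronglyMeasurable)
  simpa using h

lemma sm_H {k : Y → Y → ℝ} (hk : Measurable fun p : Y × Y => k p.1 p.2) :
    StronglyMeasurable fun P : KSBVD.PM Y =>
      ∫ x, ∫ y, k x y ∂(P : Measure Y) ∂(P : Measure Y) := by
  have h := StronglyMeasurable.integral_kernel_prod_right' (κ := pmKer Y)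
    (f := fun q : PM Y × Y => ∫ y, k q.2 y ∂(q.1 : Measure Y)) (sm_G' hk)
  simpa using h

end KSBVD

open KSBVD in
/-- Bias-variance decomposition of the expected kernel score:
`E[S_k(P̂, Y)] = −‖Q‖_k² + ‖E[P̂] − Q‖_k² + Var_k(P̂)`. -/
theorem kernel_score_bias_variance_decomposition
    {Y Ω : Type*} [MeasurableSpace Y] [MeasurableSpace Ω]
    (Pr : Measure Ω) [IsProbabilityMeasure Pr]
    (k : Y → Y → ℝ)
    (hk_meas : Measurable fun p : Y × Y => k p.1 p.2)
    (hk_symm : ∀ x y, k x y = k y x)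
    (hk_bdd : ∃ K, ∀ x y, |k x y| ≤ K)
    (hk_psd : ∀ (N : ℕ) (x : Fin N → Y) (a : Fin N → ℝ),
      0 ≤ ∑ i, ∑ j, a i * k (x i) (x j) * a j)
    (Q : Measure Y) [IsProbabilityMeasure Q]
    (Yr : Ω → Y) (hYr : Measurable Yr) (hYlaw : Pr.map Yr = Q)
    (Phat : Ω → Measure Y) (hPmeas : Measurable Phat)
    (hPprob : ∀ ω, IsProbabilityMeasure (Phat ω))
    (hindep : IndepFun Phat Yr Pr) :
    ∫ ω, kScore k (Phat ω) (Yr ω) ∂Pr =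
      -(kerInner k Q Q)
      + (kerInner k (Pr.bind Phat) (Pr.bind Phat) - 2 * kerInner k (Pr.bind Phat) Q
          + kerInner k Q Q)
      + distVar k Pr Phat := by
  classical
  obtain ⟨K, hK⟩ := hk_bdd
  have hY : Nonempty Y := by
    by_contra h
    rw [not_nonempty_iff] at h
    have h0 : (Set.univ : Set Y) = ∅ := Set.univ_eq_empty_iff.mpr h
    have h1 := measure_univ (μ := Q)
    rw [h0, measure_empty] at h1
    exact zero_ne_one h1
  obtain ⟨y0⟩ := hY
  have hK0 : 0 ≤ K := (abs_nonneg _).trans (hK y0 y0)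
  set B := Pr.bind Phat with hBdef
  haveI hBprob : IsProbabilityMeasure B := ⟨by
    rw [Measure.bind_apply MeasurableSet.univ hPmeas.aemeasurable]
    simp [(hPprob _).measure_univ]⟩
  -- the measurable "truncation" to probability measures
  set g : Measure Y → Measure Y := fun P => if P Set.univ = 1 then P else Q with hgdef
  have hgp : ∀ P, IsProbabilityMeasure (g P) := by
    intro P
    simp only [hgdef]
    split_ifs with h
    · exact ⟨h⟩
    · infer_instance
  have hgm : Measurable g := by
    refine Measurable.ite ?_ measurable_id measurable_const
    exact (Measure.measurable_coe MeasurableSet.univ) (measurableSet_singleton 1)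
  set φ : Measure Y → KSBVD.PM Y := fun P => ⟨g P, hgp P⟩ with hφdef
  have hφ : Measurable φ := hgm.subtype_mk
  set Phat' : Ω → PM Y := fun ω => φ (Phat ω) with hP'def
  have hP' : Measurable Phat' := hφ.comp hPmeas
  have hg_eq : ∀ ω, g (Phat ω) = Phat ω := fun ω => by
    simp [hgdef, (hPprob ω).measure_univ]
  have hP'eq : ∀ ω, (Phat' ω : Measure Y) = Phat ω := by
    intro ω
    simp [hP'def, hφdef, hg_eq ω]
  have hindep' : IndepFun Phat' Yr Pr := by
    have := hindep.comp hφ measurable_id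
    exact this
  set μ' := Pr.map Phat' with hμ'def
  haveI : IsProbabilityMeasure μ' := Measure.isProbabilityMeasure_map hP'.aemeasurable
  have hmap : Pr.map (fun ω => (Phat' ω, Yr ω)) = μ'.prod Q := by
    have h := (indepFun_iff_map_prod_eq_prod_map_map hP'.aemeasurable hYr.aemeasurable).mp hindep'
    rwa [hYlaw] at h
  set G : PM Y × Y → ℝ := fun p => ∫ x, k x p.2 ∂(p.1 : Measure Y) with hGdef
  have hG_sm : StronglyMeasurable G := sm_G hk_meas
  have hG_bd : ∀ p, |G p| ≤ K := fun p => abs_integral_le _ (fun x => hK x p.2)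
  -- inner-kernel bound
  have hinner_bd : ∀ (P : Measure Y), IsProbabilityMeasure P → ∀ x, |∫ y, k x y ∂P| ≤ K := by
    intro P hP x
    exact abs_integral_le _ (fun y => hK x y)
  have hH_bd : ∀ (P : Measure Y), IsProbabilityMeasure P → |kerInner k P P| ≤ K := by
    intro P hP
    exact abs_integral_le _ (fun x => hinner_bd P hP x)
  -- integrability of ω ↦ kerInner k (Phat ω) (Phat ω)
  have hA_int : Integrable (fun ω => kerInner k (Phat ω) (Phat ω)) Pr := by
    have hsm : StronglyMeasurable fun P : KSBVD.PM Y =>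
        ∫ x, ∫ y, k x y ∂(P : Measure Y) ∂(P : Measure Y) := sm_H hk_meas
    have heq : (fun ω => kerInner k (Phat ω) (Phat ω)) =
        fun ω => ∫ x, ∫ y, k x y ∂(Phat' ω : Measure Y) ∂(Phat' ω : Measure Y) := by
      funext ω
      rw [hP'eq ω]
      rfl
    rw [heq]
    refine ⟨(hsm.comp_measurable hP').aestronglyMeasurable, ?_⟩
    refine HasFiniteIntegral.of_bounded (C := K) (Filter.Eventually.of_forall fun ω => ?_)
    rw [Real.norm_eq_abs]
    have := hH_bd (Phat' ω : Measure Y) inferInstance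
    exact this
  have hb_int : Integrable (fun ω => G (Phat' ω, Yr ω)) Pr := by
    refine ⟨(hG_sm.comp_measurable (hP'.prodMk hYr)).aestronglyMeasurable, ?_⟩
    exact HasFiniteIntegral.of_bounded (C := K) (Filter.Eventually.of_forall fun ω => by
      simpa [Real.norm_eq_abs] using hG_bd (Phat' ω, Yr ω))
  -- Step 1: split the integral
  have step1 : ∫ ω, kScore k (Phat ω) (Yr ω) ∂Pr =
      (∫ ω, kerInner k (Phat ω) (Phat ω) ∂Pr) - 2 * ∫ ω, G (Phat' ω, Yr ω) ∂Pr := by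
    have heq : (fun ω => kScore k (Phat ω) (Yr ω)) =
        fun ω => kerInner k (Phat ω) (Phat ω) - 2 * G (Phat' ω, Yr ω) := by
      funext ω
      simp only [kScore, hGdef]
      rw [hP'eq ω]
    rw [heq, integral_sub hA_int (hb_int.const_mul 2), integral_const_mul]
  -- Step 2: the cross term
  have step2 : ∫ ω, G (Phat' ω, Yr ω) ∂Pr = kerInner k B Q := by
    have h1 : ∫ ω, G (Phat' ω, Yr ω) ∂Pr = ∫ p, G p ∂(μ'.prod Q) := by
      rw [← hmap]
      exact (integral_map (hP'.prodMk hYr).aemeasurable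
        (hG_sm.aestronglyMeasurable)).symm
    have hGint : Integrable G (μ'.prod Q) :=
      ⟨hG_sm.aestronglyMeasurable, HasFiniteIntegral.of_bounded (C := K)
        (Filter.Eventually.of_forall fun p => by simpa [Real.norm_eq_abs] using hG_bd p)⟩
    have h2 : ∫ p, G p ∂(μ'.prod Q) = ∫ y, ∫ P, G (P, y) ∂μ' ∂Q :=
      integral_prod_symm G hGint
    have h3 : ∀ y, ∫ P, G (P, y) ∂μ' = ∫ x, k x y ∂B := by
      intro y
      have hsm : AEStronglyMeasurable (fun P : KSBVD.PM Y => G (P, y)) μ' :=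
        (hG_sm.comp_measurable (measurable_id.prodMk measurable_const)).aestronglyMeasurable
      rw [hμ'def, integral_map hP'.aemeasurable hsm]
      have : ∀ ω, G (Phat' ω, y) = ∫ x, k x y ∂(Phat ω) := by
        intro ω
        simp only [hGdef]
        rw [hP'eq ω]
      rw [integral_congr_ae (Filter.Eventually.of_forall this)]
      exact (integral_bind_real Pr hPmeas hPprob
        (hk_meas.comp (measurable_id.prodMk measurable_const)) hK0 (fun x => hK x y)).symm
    have h4 : ∫ y, ∫ x, k x y ∂B ∂Q = kerInner k B Q := by
      have hik : Integrable (Function.uncurry k) (B.prod Q) :=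
        ⟨hk_meas.aestronglyMeasurable, HasFiniteIntegral.of_bounded (C := K)
          (Filter.Eventually.of_forall fun p => by
            simpa [Real.norm_eq_abs, Function.uncurry] using hK p.1 p.2)⟩
      have := integral_integral_swap (f := k) (μ := B) (ν := Q) hik
      exact this.symm
    rw [h1, h2]
    calc ∫ y, ∫ P, G (P, y) ∂μ' ∂Q = ∫ y, ∫ x, k x y ∂B ∂Q :=
          integral_congr_ae (Filter.Eventually.of_forall fun y => h3 y)
      _ = kerInner k B Q := h4
  rw [step1, step2]
  simp only [distVar, ← hBdef]
  ring
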